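/- Let $\Psi_1, \ldots, \Psi_N$ be pairwise commuting $n\times n$ matrices and suppose coarse propagators $\Psi^\Delta_1, \ldots, \Psi^\Delta_{N_c}$ also commute with each of the $\Psi_j$ and with each other. Then the block lower bidiagonal Schur complement $\mathcal{A}_\Delta$ (identity diagonal, subdiagonal blocks $-\mathcal{B}_{\Psi,km}^m$) commutes with the block lower triangular matrix $\mathcal{J}$ whose $(k,i)$ block is $\mathcal{Q}_i^k (\mathcal{S}_{i+1} - \Psi^\Delta_{i+2}) \mathcal{S}_i$ for $i \le k-2$ (with $\mathcal{Q}_i^k = \Psi^\Delta_{i+3}\cdots\Psi^\Delta_k$, $\mathcal{S}_i = \Psi_{(i+1)m}\cdots\Psi_{im+1}$), provided all fine propagators are equal ($\Psi_j = \Psi$) and all coarse propagators are equal ($\Psi^\Delta_k = \Psi^\Delta$). -/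

import Mathlib

set_option maxHeartbeats 1000000


open Matrix in
/-- In the uniform-time-step case (all fine propagators equal to `Ψ`, all
coarse propagators equal to `Ψc`, with `Ψ` and `Ψc` commuting), the ideal
coarse operator `𝒜_Δ` (block unit lower bidiagonal with subdiagonal blocks
`−Ψ^m`) commutes with the MGRIT error-propagation matrix `𝒥` whose `(k,i)`
block is `Ψc^{k−2−i} (Ψ^m − Ψc) Ψ^m` for `i ≤ k − 2`. -/
theorem stmt_19 {n m Nc : ℕ} (hm : 1 ≤ m)
    (Ψ Ψc : Matrix (Fin n) (Fin n) ℝ) (hcomm : Ψ * Ψc = Ψc * Ψ)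
    (AΔ J : Matrix (Fin (Nc + 1)) (Fin (Nc + 1)) (Matrix (Fin n) (Fin n) ℝ))
    (hAΔ : ∀ k i : Fin (Nc + 1), AΔ k i =
      if (k : ℕ) = (i : ℕ) then 1
      else if (k : ℕ) = (i : ℕ) + 1 then -(Ψ ^ m) else 0)
    (hJ : ∀ k i : Fin (Nc + 1), J k i =
      if (i : ℕ) + 2 ≤ (k : ℕ) then
        Ψc ^ ((k : ℕ) - 2 - (i : ℕ)) * (Ψ ^ m - Ψc) * Ψ ^ m
      else 0) :
    AΔ * J = J * AΔ := by
  have h1 : Commute Ψ Ψc := hcomm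
  set C : ℕ → Matrix (Fin n) (Fin n) ℝ :=
    fun d => Ψc ^ d * (Ψ ^ m - Ψc) * Ψ ^ m with hC
  have hkey : ∀ d, Ψ ^ m * C d = C d * Ψ ^ m := by
    intro d
    have h2 : Commute (Ψ ^ m) (Ψc ^ d * ((Ψ ^ m - Ψc) * Ψ ^ m)) :=
      ((h1.pow_pow m d).mul_right
        (((Commute.refl (Ψ ^ m)).sub_right (h1.pow_left m)).mul_right
          (Commute.refl (Ψ ^ m))))
    simpa [hC, mul_assoc] using h2.eq
  apply Matrix.ext
  intro k i
  have hLHS : (AΔ * J) k i =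
      (if (i : ℕ) + 2 ≤ (k : ℕ) then C ((k : ℕ) - 2 - (i : ℕ)) else 0)
      + (if (i : ℕ) + 3 ≤ (k : ℕ) then -(Ψ ^ m) * C ((k : ℕ) - 3 - (i : ℕ)) else 0) := by
    rw [Matrix.mul_apply]
    have hsplit : ∀ j : Fin (Nc + 1), AΔ k j * J j i =
        (if k = j then J j i else 0)
        + (if (k : ℕ) = (j : ℕ) + 1 then -(Ψ ^ m) * J j i else 0) := by
      intro j
      rw [hAΔ]
      by_cases h : (k : ℕ) = (j : ℕ)
      · have : k = j := Fin.ext h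
        simp [h, this]
      · have hne : k ≠ j := fun hh => h (congrArg Fin.val hh)
        by_cases h2 : (k : ℕ) = (j : ℕ) + 1 <;> simp [h, h2, hne]
    rw [Finset.sum_congr rfl (fun j _ => hsplit j), Finset.sum_add_distrib]
    have hs1 : (∑ j : Fin (Nc + 1), if k = j then J j i else 0) = J k i := by
      simp
    have hs2 : (∑ j : Fin (Nc + 1), if (k : ℕ) = (j : ℕ) + 1 then -(Ψ ^ m) * J j i else 0)
        = (if (i : ℕ) + 3 ≤ (k : ℕ) then -(Ψ ^ m) * C ((k : ℕ) - 3 - (i : ℕ)) else 0) := by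
      by_cases hk : 1 ≤ (k : ℕ)
      · have hlt : (k : ℕ) - 1 < Nc + 1 := by omega
        rw [Fintype.sum_eq_single (⟨(k : ℕ) - 1, hlt⟩ : Fin (Nc + 1))]
        · rw [hJ]
          simp only [Fin.val_mk]
          by_cases hik : (i : ℕ) + 3 ≤ (k : ℕ)
          · have h2 : (i : ℕ) + 2 ≤ (k : ℕ) - 1 := by omega
            have h3 : (k : ℕ) - 1 - 2 - (i : ℕ) = (k : ℕ) - 3 - (i : ℕ) := by omega
            simp only [h2, if_pos, hik, h3]
            simp [hk, hC]
          · have h2 : ¬ ((i : ℕ) + 2 ≤ (k : ℕ) - 1) := by omega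
            simp [h2, hik]
        · intro b hb
          have : ¬ ((k : ℕ) = (b : ℕ) + 1) := by
            intro hh
            apply hb
            apply Fin.ext
            simp
            omega
          simp [this]
      · have hk0 : (k : ℕ) = 0 := by omega
        have : ∀ j : Fin (Nc + 1), ¬ ((k : ℕ) = (j : ℕ) + 1) := by
          intro j; omega
        have hik : ¬ ((i : ℕ) + 3 ≤ (k : ℕ)) := by omega
        simp [this, hik]
    rw [hs1, hs2, hJ]
  have hRHS : (J * AΔ) k i =
      (if (i : ℕ) + 2 ≤ (k : ℕ) then C ((k : ℕ) - 2 - (i : ℕ)) else 0)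
      + (if (i : ℕ) + 3 ≤ (k : ℕ) then C ((k : ℕ) - 3 - (i : ℕ)) * -(Ψ ^ m) else 0) := by
    rw [Matrix.mul_apply]
    have hsplit : ∀ j : Fin (Nc + 1), J k j * AΔ j i =
        (if j = i then J k j else 0)
        + (if (j : ℕ) = (i : ℕ) + 1 then J k j * -(Ψ ^ m) else 0) := by
      intro j
      rw [hAΔ]
      by_cases h : (j : ℕ) = (i : ℕ)
      · have : j = i := Fin.ext h
        simp [h, this]
      · have hne : j ≠ i := fun hh => h (congrArg Fin.val hh)
        by_cases h2 : (j : ℕ) = (i : ℕ) + 1 <;> simp [h, h2, hne]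
    rw [Finset.sum_congr rfl (fun j _ => hsplit j), Finset.sum_add_distrib]
    have hs1 : (∑ j : Fin (Nc + 1), if j = i then J k j else 0) = J k i := by
      simp
    have hs2 : (∑ j : Fin (Nc + 1), if (j : ℕ) = (i : ℕ) + 1 then J k j * -(Ψ ^ m) else 0)
        = (if (i : ℕ) + 3 ≤ (k : ℕ) then C ((k : ℕ) - 3 - (i : ℕ)) * -(Ψ ^ m) else 0) := by
      by_cases hi : (i : ℕ) + 1 < Nc + 1
      · rw [Fintype.sum_eq_single (⟨(i : ℕ) + 1, hi⟩ : Fin (Nc + 1))]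
        · rw [hJ]
          simp only [Fin.val_mk]
          by_cases hik : (i : ℕ) + 3 ≤ (k : ℕ)
          · have h2 : (i : ℕ) + 1 + 2 ≤ (k : ℕ) := by omega
            have h3 : (k : ℕ) - 2 - ((i : ℕ) + 1) = (k : ℕ) - 3 - (i : ℕ) := by omega
            simp [h2, hik, h3, hC]
          · have h2 : ¬ ((i : ℕ) + 1 + 2 ≤ (k : ℕ)) := by omega
            simp [h2, hik]
        · intro b hb
          have : ¬ ((b : ℕ) = (i : ℕ) + 1) := by
            intro hh
            exact hb (Fin.ext hh)
          simp [this]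
      · have h0 : ∀ j : Fin (Nc + 1), ¬ ((j : ℕ) = (i : ℕ) + 1) := by
          intro j; have := j.isLt; omega
        have hik : ¬ ((i : ℕ) + 3 ≤ (k : ℕ)) := by
          have := k.isLt; omega
        simp [h0, hik]
    rw [hs1, hs2, hJ]
  rw [hLHS, hRHS]
  congr 1
  by_cases hik : (i : ℕ) + 3 ≤ (k : ℕ)
  · simp only [hik, if_pos]
    rw [neg_mul, mul_neg, hkey]
  · simp [hik]
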